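/- Let q be a prime power with q - 1 = 4k + R for some R ∈ {1,...,5} and k ≥ 1. The mixed graph H_q has girth exactly 5: every mixed (directed/undirected) cycle has length at least 5, and a mixed cycle of length 5 exists. -/

import Mathlib

open Sum

/-- Vertices of `H_q` (= vertices of `G_q`): points `(x,y)` with `x ∈ F*`, points `P_m`,
lines `[m,b]` with `m ∈ F*`, and lines `L_x`. -/
abbrev Vtx (F : Type) [Field F] : Type := (Fˣ × F ⊕ Fˣ) ⊕ (Fˣ × F ⊕ Fˣ)

/-- Edges of `G_q ⊆ H_q`: `(x,y) ~ [m,b]` iff `y = m x + b`; `(x,y) ~ L_x`;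
`[m,b] ~ P_m`. -/
def HEdge {F : Type} [Field F] : Vtx F → Vtx F → Prop
  | inl (inl (x, y)), inr (inl (m, b)) => y = (m : F) * x + b
  | inr (inl (m, b)), inl (inl (x, y)) => y = (m : F) * x + b
  | inl (inl (x, _)), inr (inr x') => x = x'
  | inr (inr x'), inl (inl (x, _)) => x = x'
  | inl (inr m), inr (inl (m', _)) => m = m'
  | inr (inl (m', _)), inl (inr m) => m = m'
  | _, _ => False

/-- Arcs of `H_q`, given a primitive element `ξ` and jumps `i ∈ {1,…,k}`:
`((x,y),(xξ^i,y))`, `(L_x, L_{xξ^i})`, `([m,b],[m/ξ^i,b])`, `(P_m, P_{m/ξ^i})`. -/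
def HArc {F : Type} [Field F] (ξ : Fˣ) (k : ℕ) : Vtx F → Vtx F → Prop
  | inl (inl (x, y)), inl (inl (x', y')) =>
      y = y' ∧ ∃ i : ℕ, 1 ≤ i ∧ i ≤ k ∧ x' = x * ξ ^ i
  | inr (inr x), inr (inr x') => ∃ i : ℕ, 1 ≤ i ∧ i ≤ k ∧ x' = x * ξ ^ i
  | inr (inl (m, b)), inr (inl (m', b')) =>
      b = b' ∧ ∃ i : ℕ, 1 ≤ i ∧ i ≤ k ∧ m' = m * (ξ ^ i)⁻¹
  | inl (inr m), inl (inr m') => ∃ i : ℕ, 1 ≤ i ∧ i ≤ k ∧ m' = m * (ξ ^ i)⁻¹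
  | _, _ => False

/-- A mixed cycle of length `ℓ` in `H_q`: an injective cyclic sequence of vertices where
each step is an arc (traversed forwards) or an edge; a closed walk of length 2 using the
same edge twice is not a cycle. -/
def IsMixedCycle {F : Type} [Field F] (ξ : Fˣ) (k ℓ : ℕ) (f : ZMod ℓ → Vtx F) : Prop :=
  Function.Injective f ∧
    ∃ s : ZMod ℓ → Bool,
      (∀ t : ZMod ℓ, if s t then HArc ξ k (f t) (f (t + 1)) else HEdge (f t) (f (t + 1))) ∧
      (ℓ = 2 → s 0 = true ∨ s 1 = true)

section Aux
variable {F : Type} [Field F] {ξ : Fˣ} {k : ℕ}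

/-- arc with an explicit power -/
def ArcPow (ξ : Fˣ) (n : ℕ) : Vtx F → Vtx F → Prop
  | inl (inl (x, y)), inl (inl (x', y')) => y = y' ∧ x' = x * ξ ^ n
  | inr (inr x), inr (inr x') => x' = x * ξ ^ n
  | inr (inl (m, b)), inr (inl (m', b')) => b = b' ∧ m' = m * (ξ ^ n)⁻¹
  | inl (inr m), inl (inr m') => m' = m * (ξ ^ n)⁻¹
  | _, _ => False

lemma arc_pow {u v : Vtx F} (h : HArc ξ k u v) :
    ∃ n, 1 ≤ n ∧ n ≤ k ∧ ArcPow ξ n u v := by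
  rcases u with ((⟨x0,y0⟩|m0)|(⟨n0,b0⟩|z0)) <;>
    rcases v with ((⟨x1,y1⟩|m1)|(⟨n1,b1⟩|z1)) <;>
      simp only [HArc] at h
  · obtain ⟨hy, i, h1, h2, h3⟩ := h; exact ⟨i, h1, h2, hy, h3⟩
  · obtain ⟨i, h1, h2, h3⟩ := h; exact ⟨i, h1, h2, h3⟩
  · obtain ⟨hb, i, h1, h2, h3⟩ := h; exact ⟨i, h1, h2, hb, h3⟩
  · obtain ⟨i, h1, h2, h3⟩ := h; exact ⟨i, h1, h2, h3⟩

lemma arcPow_comp {u v w : Vtx F} {n m : ℕ} (h1 : ArcPow ξ n u v) (h2 : ArcPow ξ m v w) :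
    ArcPow ξ (n + m) u w := by
  rcases u with ((⟨x0,y0⟩|m0)|(⟨n0,b0⟩|z0)) <;>
    rcases v with ((⟨x1,y1⟩|m1)|(⟨n1,b1⟩|z1)) <;>
      rcases w with ((⟨x2,y2⟩|m2)|(⟨n2,b2⟩|z2)) <;>
        simp only [ArcPow] at *
  all_goals first
    | (obtain ⟨e1, rfl⟩ := h1; obtain ⟨e2, rfl⟩ := h2;
       exact ⟨e1.trans e2, by simp [pow_add, mul_inv, mul_assoc, mul_comm, mul_left_comm]⟩)
    | (subst h1; subst h2; simp [pow_add, mul_inv, mul_assoc, mul_comm, mul_left_comm])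

lemma sd_edge {u v : Vtx F} (h : HEdge u v) : u.isLeft = !v.isLeft := by
  rcases u with ((⟨x0,y0⟩|m0)|(⟨n0,b0⟩|z0)) <;>
    rcases v with ((⟨x1,y1⟩|m1)|(⟨n1,b1⟩|z1)) <;>
      simp only [HEdge] at h
  all_goals rfl

lemma sd_arc {u v : Vtx F} (h : HArc ξ k u v) : u.isLeft = v.isLeft := by
  rcases u with ((⟨x0,y0⟩|m0)|(⟨n0,b0⟩|z0)) <;>
    rcases v with ((⟨x1,y1⟩|m1)|(⟨n1,b1⟩|z1)) <;>
      simp only [HArc] at h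
  all_goals rfl

end Aux

section Contra
variable {F : Type} [Field F] {ξ : Fˣ} {k : ℕ}
variable (hne : ∀ n : ℕ, 1 ≤ n → n ≤ 4*k → ξ ^ n ≠ 1)

include hne

lemma fix_pow {x : Fˣ} {n : ℕ} (h1 : 1 ≤ n) (h2 : n ≤ 4*k) (h : x = x * ξ ^ n) : False := by
  apply hne n h1 h2
  have hx : x * ξ ^ n = x * 1 := by rw [mul_one]; exact h.symm
  exact mul_left_cancel hx

lemma fix_pow_inv {x : Fˣ} {n : ℕ} (h1 : 1 ≤ n) (h2 : n ≤ 4*k) (h : x = x * (ξ ^ n)⁻¹) :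
    False := by
  apply hne n h1 h2
  have hx : x * (ξ ^ n)⁻¹ = x * 1 := by rw [mul_one]; exact h.symm
  have := mul_left_cancel hx
  rwa [inv_eq_one] at this

lemma pow_inv_contra {n m : ℕ} (h1 : 1 ≤ n + m) (h2 : n + m ≤ 4*k)
    (h : ξ ^ n = (ξ ^ m)⁻¹) : False := by
  apply hne (n+m) h1 h2
  rw [pow_add, h, inv_mul_cancel]

omit hne

lemma helper1 {a x t s : Fˣ} (E : a * (x * t) = a * s⁻¹ * x) : t = s⁻¹ := by
  rw [mul_assoc, mul_comm s⁻¹ x] at E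
  exact mul_left_cancel (mul_left_cancel E)

include hne

lemma Tgen {v0 v1 v2 : Vtx F} {n : ℕ} (hn1 : 1 ≤ n) (hnk : n ≤ 4*k)
    (h0 : ArcPow ξ n v0 v1) (h1 : HEdge v1 v2) (h2 : HEdge v2 v0) : False := by
  rcases v0 with ((⟨x0,y0⟩|p0)|(⟨m0,b0⟩|z0)) <;>
    rcases v1 with ((⟨x1,y1⟩|p1)|(⟨m1,b1⟩|z1)) <;>
      rcases v2 with ((⟨x2,y2⟩|p2)|(⟨m2,b2⟩|z2)) <;>
        simp only [ArcPow, HEdge] at h0 h1 h2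
  -- 1. aff aff MB
  · obtain ⟨rfl, rfl⟩ := h0
    have hF : (m2:F) * ↑(x0 * ξ ^ n) = ↑m2 * ↑x0 := add_right_cancel (h1.symm.trans h2)
    have hu : x0 * ξ ^ n = x0 := Units.ext (mul_left_cancel₀ (Units.ne_zero m2) hF)
    exact fix_pow hne hn1 hnk hu.symm
  -- 2. aff aff L
  · obtain ⟨rfl, rfl⟩ := h0
    exact fix_pow hne hn1 hnk (h2.trans h1.symm)
  -- 3. P P MB
  · subst h0
    exact fix_pow_inv hne hn1 hnk (h2.trans h1.symm)
  -- 4. MB MB aff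
  · obtain ⟨rfl, rfl⟩ := h0
    have hF : ↑(m0 * (ξ ^ n)⁻¹) * (x2:F) = ↑m0 * ↑x2 := add_right_cancel (h1.symm.trans h2)
    have hu : m0 * (ξ ^ n)⁻¹ = m0 := Units.ext (mul_right_cancel₀ (Units.ne_zero x2) hF)
    exact fix_pow_inv hne hn1 hnk hu.symm
  -- 5. MB MB P
  · obtain ⟨rfl, rfl⟩ := h0
    exact fix_pow_inv hne hn1 hnk (h2.symm.trans h1)
  -- 6. L L aff
  · subst h0
    exact fix_pow hne hn1 hnk (h2.symm.trans h1)

end Contra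

section Contra2
variable {F : Type} [Field F] {ξ : Fˣ} {k : ℕ}
variable (hne : ∀ n : ℕ, 1 ≤ n → n ≤ 4*k → ξ ^ n ≠ 1)

include hne

lemma Qalt {v0 v1 v2 v3 : Vtx F} {n m : ℕ} (hn1 : 1 ≤ n) (hnk : n ≤ 2*k)
    (hm1 : 1 ≤ m) (hmk : m ≤ 2*k)
    (h0 : ArcPow ξ n v0 v1) (h1 : HEdge v1 v2) (h2 : ArcPow ξ m v2 v3)
    (h3 : HEdge v3 v0) : False := by
  rcases v0 with ((⟨x0,y0⟩|p0)|(⟨m0,b0⟩|z0)) <;>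
    rcases v1 with ((⟨x1,y1⟩|p1)|(⟨m1,b1⟩|z1)) <;>
      rcases v2 with ((⟨x2,y2⟩|p2)|(⟨m2,b2⟩|z2)) <;>
        rcases v3 with ((⟨x3,y3⟩|p3)|(⟨m3,b3⟩|z3)) <;>
          simp only [ArcPow, HEdge] at h0 h1 h2 h3
  -- aff aff MB MB
  · obtain ⟨rfl, rfl⟩ := h0
    obtain ⟨rfl, rfl⟩ := h2
    have hF : (m2:F) * ↑(x0 * ξ ^ n) = ↑(m2 * (ξ ^ m)⁻¹) * ↑x0 :=
      add_right_cancel (h1.symm.trans h3)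
    have hu : m2 * (x0 * ξ ^ n) = m2 * (ξ ^ m)⁻¹ * x0 := Units.ext hF
    exact pow_inv_contra hne (by omega) (by omega) (helper1 hu)
  -- aff aff L L
  · obtain ⟨rfl, rfl⟩ := h0
    subst h2
    -- h1 : x0 * ξ^n = z2, h3 : x0 = z2 * ξ^m
    rw [← h1, mul_assoc, ← pow_add] at h3
    exact fix_pow hne (by omega) (by omega) h3
  -- P P MB MB
  · subst h0
    obtain ⟨rfl, rfl⟩ := h2
    -- h1 : p0 * (ξ^n)⁻¹ = m2, h3 : p0 = m2 * (ξ^m)⁻¹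
    rw [← h1, mul_assoc, ← mul_inv, ← pow_add] at h3
    exact fix_pow_inv hne (by omega) (by omega) h3
  -- MB MB aff aff
  · obtain ⟨rfl, rfl⟩ := h0
    obtain ⟨rfl, rfl⟩ := h2
    -- h1 : y2 = (m0 * (ξ^n)⁻¹) * x2 + b0 ; h3 : y2 = m0 * (x2 * ξ^m) + b0
    have hF : ↑(m0 * (ξ ^ n)⁻¹) * (x2:F) = ↑m0 * ↑(x2 * ξ ^ m) :=
      add_right_cancel (h1.symm.trans h3)
    have hu : m0 * (x2 * ξ ^ m) = m0 * (ξ ^ n)⁻¹ * x2 := (Units.ext hF).symm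
    exact pow_inv_contra hne (by omega) (by omega) (helper1 hu)
  -- MB MB P P
  · obtain ⟨rfl, rfl⟩ := h0
    subst h2
    -- h1 : p2 = m0 * (ξ^n)⁻¹ ; h3 : p2 * (ξ^m)⁻¹ = m0
    rw [h1, mul_assoc, ← mul_inv, ← pow_add] at h3
    exact fix_pow_inv hne (by omega) (by omega) h3.symm
  -- L L aff aff
  · subst h0
    obtain ⟨rfl, rfl⟩ := h2
    -- h1 : x2 = z0 * ξ^n ; h3 : x2 * ξ^m = z0
    rw [h1, mul_assoc, ← pow_add] at h3
    exact fix_pow hne (by omega) (by omega) h3.symm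

omit hne

lemma Q0 {v0 v1 v2 v3 : Vtx F} (d02 : v0 ≠ v2) (d13 : v1 ≠ v3)
    (h0 : HEdge v0 v1) (h1 : HEdge v1 v2) (h2 : HEdge v2 v3) (h3 : HEdge v3 v0) :
    False := by
  rcases v0 with ((⟨x0,y0⟩|p0)|(⟨m0,b0⟩|z0)) <;>
    rcases v1 with ((⟨x1,y1⟩|p1)|(⟨m1,b1⟩|z1)) <;>
      rcases v2 with ((⟨x2,y2⟩|p2)|(⟨m2,b2⟩|z2)) <;>
        rcases v3 with ((⟨x3,y3⟩|p3)|(⟨m3,b3⟩|z3)) <;>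
          simp only [HEdge] at h0 h1 h2 h3
  -- aff MB aff MB
  · by_cases hm : m1 = m3
    · subst hm
      have hb : b1 = b3 := add_left_cancel (h0.symm.trans h3)
      exact d13 (by rw [hb])
    · have hmv : (m1:F) ≠ m3 := fun h => hm (Units.ext h)
      have hx : (x0:F) = x2 :=
        mul_left_cancel₀ (sub_ne_zero.mpr hmv) (by linear_combination h3 - h0 + h1 - h2)
      have hx' : x0 = x2 := Units.ext hx
      subst hx'
      have hy : y0 = y2 := by rw [h0, h1]
      exact d02 (by rw [hy])
  -- aff MB aff L
  · have hx : x0 = x2 := h3.trans h2.symm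
    subst hx
    have hy : y0 = y2 := by rw [h0, h1]
    exact d02 (by rw [hy])
  -- aff MB P MB
  · have hm : m1 = m3 := h1.symm.trans h2
    subst hm
    have hb : b1 = b3 := add_left_cancel (h0.symm.trans h3)
    exact d13 (by rw [hb])
  -- aff L aff MB
  · have hx : x0 = x2 := h0.trans h1.symm
    subst hx
    have hy : y0 = y2 := by rw [h3, h2]
    exact d02 (by rw [hy])
  -- aff L aff L
  · have hz : z1 = z3 := h0.symm.trans h3
    exact d13 (by rw [hz])
  -- P MB aff MB
  · have hm : m1 = m3 := h0.symm.trans h3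
    subst hm
    have hb : b1 = b3 := add_left_cancel (h1.symm.trans h2)
    exact d13 (by rw [hb])
  -- P MB P MB
  · have hp : p0 = p2 := h0.trans h1.symm
    exact d02 (by rw [hp])
  -- MB aff MB aff
  · by_cases hm : m0 = m2
    · subst hm
      have hb : b0 = b2 := add_left_cancel (h0.symm.trans h1)
      exact d02 (by rw [hb])
    · have hmv : (m0:F) ≠ m2 := fun h => hm (Units.ext h)
      have hx : (x1:F) = x3 :=
        mul_left_cancel₀ (sub_ne_zero.mpr hmv) (by linear_combination h1 - h0 + h3 - h2)
      have hx' : x1 = x3 := Units.ext hx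
      subst hx'
      have hy : y1 = y3 := by rw [h0, h3]
      exact d13 (by rw [hy])
  -- MB aff MB P
  · have hm : m0 = m2 := h3.symm.trans h2
    subst hm
    have hb : b0 = b2 := add_left_cancel (h0.symm.trans h1)
    exact d02 (by rw [hb])
  -- MB aff L aff
  · have hx : x1 = x3 := h1.trans h2.symm
    subst hx
    have hy : y1 = y3 := by rw [h0, h3]
    exact d13 (by rw [hy])
  -- MB P MB aff
  · have hm : m0 = m2 := h0.symm.trans h1
    subst hm
    have hb : b0 = b2 := add_left_cancel (h3.symm.trans h2)
    exact d02 (by rw [hb])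
  -- MB P MB P
  · have hp : p1 = p3 := h0.trans h3.symm
    exact d13 (by rw [hp])
  -- L aff MB aff
  · have hx : x1 = x3 := h0.trans h3.symm
    subst hx
    have hy : y1 = y3 := by rw [h1, h2]
    exact d13 (by rw [hy])
  -- L aff L aff
  · have hz : z0 = z2 := h0.symm.trans h1
    exact d02 (by rw [hz])

end Contra2

section Main
variable {F : Type} [Field F] {ξ : Fˣ} {k : ℕ}

lemma fix_loop (hne : ∀ n : ℕ, 1 ≤ n → n ≤ 4*k → ξ ^ n ≠ 1)
    {v : Vtx F} {n : ℕ} (h1 : 1 ≤ n) (h2 : n ≤ 4*k) (h : ArcPow ξ n v v) : False := by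
  rcases v with ((⟨x,y⟩|p)|(⟨m,b⟩|z)) <;> simp only [ArcPow] at h
  · exact fix_pow hne h1 h2 h.2
  · exact fix_pow_inv hne h1 h2 h
  · exact fix_pow_inv hne h1 h2 h.2
  · exact fix_pow hne h1 h2 h

lemma no_short [Fintype F] (hne : ∀ n : ℕ, 1 ≤ n → n ≤ 4*k → ξ ^ n ≠ 1) :
    ∀ (ℓ : ℕ) (f : ZMod ℓ → Vtx F), IsMixedCycle ξ k ℓ f → 5 ≤ ℓ := by
  intro ℓ f hf
  by_contra hlt
  push_neg at hlt
  interval_cases ℓ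
  -- ℓ = 0
  · obtain ⟨hinj, -⟩ := hf
    haveI : Finite (ZMod 0) := Finite.of_injective f hinj
    exact not_finite (ZMod 0)
  -- ℓ = 1
  · obtain ⟨-, s, hstep, -⟩ := hf
    have h0 := hstep 0
    rw [show ((0:ZMod 1) + 1 = 0) from by decide] at h0
    split at h0
    · obtain ⟨n, hn1, hnk, hp⟩ := arc_pow h0
      exact fix_loop hne hn1 (by omega) hp
    · have := sd_edge h0
      revert this; cases f 0 <;> simp
  -- ℓ = 2
  · obtain ⟨hinj, s, hstep, hs2⟩ := hf
    have h0 := hstep 0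
    have h1 := hstep 1
    rw [show ((0:ZMod 2) + 1 = 1) from by decide] at h0
    rw [show ((1:ZMod 2) + 1 = 0) from by decide] at h1
    split at h0 <;> split at h1
    · obtain ⟨n, hn1, hnk, p0⟩ := arc_pow h0
      obtain ⟨m, hm1, hmk, p1⟩ := arc_pow h1
      exact fix_loop hne (by omega) (by omega) (arcPow_comp p0 p1)
    · have e := sd_edge h1
      rw [← sd_arc h0] at e
      revert e; cases f 0 <;> simp
    · have e := sd_edge h0
      rw [sd_arc h1] at e
      revert e; cases f 0 <;> simp
    · rcases hs2 rfl with h | h <;> simp_all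
  -- ℓ = 3
  · obtain ⟨hinj, s, hstep, -⟩ := hf
    have h0 := hstep 0
    have h1 := hstep 1
    have h2 := hstep 2
    rw [show ((0:ZMod 3) + 1 = 1) from by decide] at h0
    rw [show ((1:ZMod 3) + 1 = 2) from by decide] at h1
    rw [show ((2:ZMod 3) + 1 = 0) from by decide] at h2
    split at h0 <;> split at h1 <;> split at h2
    -- TTT
    · obtain ⟨n, hn1, hnk, p0⟩ := arc_pow h0
      obtain ⟨m, hm1, hmk, p1⟩ := arc_pow h1
      obtain ⟨l, hl1, hlk, p2⟩ := arc_pow h2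
      exact fix_loop hne (by omega) (by omega) (arcPow_comp (arcPow_comp p0 p1) p2)
    -- TTF : 1 edge, parity
    · have e := sd_edge h2
      rw [← sd_arc h1, ← sd_arc h0] at e
      revert e; cases f 0 <;> simp
    -- TFT : 1 edge, parity
    · have e := sd_edge h1
      rw [← sd_arc h0, sd_arc h2] at e
      revert e; cases f 0 <;> simp
    -- TFF : arc, edge, edge
    · obtain ⟨n, hn1, hnk, p0⟩ := arc_pow h0
      exact Tgen hne hn1 (by omega) p0 h1 h2
    -- FTT : parity (1 edge)
    · have e := sd_edge h0
      rw [sd_arc h1, sd_arc h2] at e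
      revert e; cases f 0 <;> simp
    -- FTF : edge, arc, edge -> rotate
    · obtain ⟨n, hn1, hnk, p1⟩ := arc_pow h1
      exact Tgen hne hn1 (by omega) p1 h2 h0
    -- FFT : edge, edge, arc -> rotate
    · obtain ⟨n, hn1, hnk, p2⟩ := arc_pow h2
      exact Tgen hne hn1 (by omega) p2 h0 h1
    -- FFF : 3 edges, parity
    · have e := sd_edge h0
      rw [sd_edge h1, sd_edge h2] at e
      revert e; cases f 0 <;> simp
  -- ℓ = 4
  · obtain ⟨hinj, s, hstep, -⟩ := hf
    have h0 := hstep 0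
    have h1 := hstep 1
    have h2 := hstep 2
    have h3 := hstep 3
    rw [show ((0:ZMod 4) + 1 = 1) from by decide] at h0
    rw [show ((1:ZMod 4) + 1 = 2) from by decide] at h1
    rw [show ((2:ZMod 4) + 1 = 3) from by decide] at h2
    rw [show ((3:ZMod 4) + 1 = 0) from by decide] at h3
    have d02 : f 0 ≠ f 2 := fun h => absurd (hinj h) (by decide)
    have d13 : f 1 ≠ f 3 := fun h => absurd (hinj h) (by decide)
    split at h0 <;> split at h1 <;> split at h2 <;> split at h3
    -- TTTT
    · obtain ⟨n, hn1, hnk, p0⟩ := arc_pow h0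
      obtain ⟨m, hm1, hmk, p1⟩ := arc_pow h1
      obtain ⟨l, hl1, hlk, p2⟩ := arc_pow h2
      obtain ⟨o, ho1, hok, p3⟩ := arc_pow h3
      exact fix_loop hne (by omega) (by omega)
        (arcPow_comp (arcPow_comp (arcPow_comp p0 p1) p2) p3)
    -- TTTF : parity
    · have e := sd_edge h3
      rw [← sd_arc h2, ← sd_arc h1, ← sd_arc h0] at e
      revert e; cases f 0 <;> simp
    -- TTFT : parity
    · have e := sd_edge h2
      rw [← sd_arc h1, ← sd_arc h0, sd_arc h3] at e
      revert e; cases f 0 <;> simp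
    -- TTFF : arcs at 0,1 ; edges at 2,3
    · obtain ⟨n, hn1, hnk, p0⟩ := arc_pow h0
      obtain ⟨m, hm1, hmk, p1⟩ := arc_pow h1
      exact Tgen hne (by omega) (by omega) (arcPow_comp p0 p1) h2 h3
    -- TFTT : parity
    · have e := sd_edge h1
      rw [← sd_arc h0, sd_arc h2, sd_arc h3] at e
      revert e; cases f 0 <;> simp
    -- TFTF : alternating
    · obtain ⟨n, hn1, hnk, p0⟩ := arc_pow h0
      obtain ⟨m, hm1, hmk, p2⟩ := arc_pow h2
      exact Qalt hne hn1 (by omega) hm1 (by omega) p0 h1 p2 h3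
    -- TFFT : arcs at 3,0 ; edges at 1,2 -> rotate to start 3
    · obtain ⟨n, hn1, hnk, p3⟩ := arc_pow h3
      obtain ⟨m, hm1, hmk, p0⟩ := arc_pow h0
      exact Tgen hne (by omega) (by omega) (arcPow_comp p3 p0) h1 h2
    -- TFFF : parity (3 edges)
    · have e := sd_edge h1
      rw [sd_edge h2, sd_edge h3, ← sd_arc h0] at e
      revert e; cases f 0 <;> simp
    -- FTTT : parity
    · have e := sd_edge h0
      rw [sd_arc h1, sd_arc h2, sd_arc h3] at e
      revert e; cases f 0 <;> simp
    -- FTTF : arcs at 1,2 ; edges at 3,0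
    · obtain ⟨n, hn1, hnk, p1⟩ := arc_pow h1
      obtain ⟨m, hm1, hmk, p2⟩ := arc_pow h2
      exact Tgen hne (by omega) (by omega) (arcPow_comp p1 p2) h3 h0
    -- FTFT : alternating rotated
    · obtain ⟨n, hn1, hnk, p1⟩ := arc_pow h1
      obtain ⟨m, hm1, hmk, p3⟩ := arc_pow h3
      exact Qalt hne hn1 (by omega) hm1 (by omega) p1 h2 p3 h0
    -- FTFF : parity
    · have e := sd_edge h0
      rw [sd_arc h1, sd_edge h2, sd_edge h3] at e
      revert e; cases f 0 <;> simp
    -- FFTT : arcs at 2,3 ; edges at 0,1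
    · obtain ⟨n, hn1, hnk, p2⟩ := arc_pow h2
      obtain ⟨m, hm1, hmk, p3⟩ := arc_pow h3
      exact Tgen hne (by omega) (by omega) (arcPow_comp p2 p3) h0 h1
    -- FFTF : parity
    · have e := sd_edge h0
      rw [sd_edge h1, sd_arc h2, sd_edge h3] at e
      revert e; cases f 0 <;> simp
    -- FFFT : parity
    · have e := sd_edge h0
      rw [sd_edge h1, sd_edge h2, sd_arc h3] at e
      revert e; cases f 0 <;> simp
    -- FFFF : 4 edges
    · exact Q0 d02 d13 h0 h1 h2 h3

end Main
section E
open Sum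
variable {F : Type} [Field F] {ξ : Fˣ} {k : ℕ}
lemma exists5 (hne : ∀ n : ℕ, 1 ≤ n → n ≤ 4*k → ξ ^ n ≠ 1) (hk : 1 ≤ k) :
    ∃ f : ZMod 5 → Vtx F, IsMixedCycle ξ k 5 f := by
  have hξ1 : ξ ≠ 1 := by have := hne 1 le_rfl (by omega); rwa [pow_one] at this
  have hξ2 : ξ ^ 2 ≠ 1 := hne 2 (by omega) (by omega)
  have ha : (1:F) + ξ ≠ 0 := by
    intro h
    apply hξ2
    have hx : (ξ:F) = -1 := by linear_combination h
    apply Units.ext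
    push_cast
    rw [hx]; ring
  set a : Fˣ := Units.mk0 ((1:F) + ξ) ha with ha'
  set x3 : Fˣ := ξ * a⁻¹ with hx3
  have d1 : (1:Fˣ) ≠ ξ := fun h => hξ1 h.symm
  have d4 : (1:Fˣ) ≠ ξ ^ 2 := fun h => hξ2 h.symm
  have d2 : (1:Fˣ) ≠ x3 := by
    intro h
    have : ξ = a := mul_inv_eq_one.mp h.symm
    have hv := congrArg Units.val this
    simp [ha'] at hv
  have d3 : ξ ≠ x3 := by
    intro h
    have h1 : a⁻¹ = 1 := by
      have := mul_left_cancel (a := ξ) (h.symm.trans (mul_one ξ).symm)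
      simpa using this.symm
    have : a = 1 := by rwa [inv_eq_one] at h1
    have hv := congrArg Units.val this
    simp [ha'] at hv
  refine ⟨![inl (inl (1, 0)), inl (inl (ξ, 0)), inr (inl (1, -(ξ:F))),
      inl (inl (x3, (x3:F) - ξ)), inr (inl (ξ^2, -((ξ:F)^2)))], ?_,
      ![true, false, false, false, false], ?_, fun h => absurd h (by decide)⟩
  · intro u w huw
    fin_cases u <;> fin_cases w <;> simp_all <;> rfl
  · intro t
    fin_cases t
    · exact ⟨rfl, 1, le_rfl, hk, by rw [pow_one, one_mul]⟩
    · show (0:F) = ((1:Fˣ):F) * (ξ:F) + (-(ξ:F))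
      simp
    · show ((x3:F) - ξ) = ((1:Fˣ):F) * (x3:F) + (-(ξ:F))
      simp [sub_eq_add_neg]
    · show ((x3:F) - ξ) = ((ξ^2:Fˣ):F) * (x3:F) + (-((ξ:F)^2))
      push_cast
      rw [hx3]
      push_cast
      rw [ha']
      simp only [Units.val_mk0]
      field_simp
      ring
    · show (0:F) = ((ξ^2:Fˣ):F) * ((1:Fˣ):F) + (-((ξ:F)^2))
      push_cast
      ring
end E

theorem Hq_girth_five (q k R : ℕ) (hq : IsPrimePow q)
    (F : Type) [Field F] [Fintype F] (hcard : Fintype.card F = q)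
    (ξ : Fˣ) (hξ : ∀ a : Fˣ, a ∈ Subgroup.zpowers ξ)
    (hk : 1 ≤ k) (hR1 : 1 ≤ R) (hR5 : R ≤ 5) (hqk : q - 1 = 4 * k + R) :
    (∀ (ℓ : ℕ) (f : ZMod ℓ → Vtx F), IsMixedCycle ξ k ℓ f → 5 ≤ ℓ) ∧
      ∃ f : ZMod 5 → Vtx F, IsMixedCycle ξ k 5 f := by
  classical
  have hq1 : Fintype.card Fˣ = q - 1 := by rw [Fintype.card_units, hcard]
  have horder : orderOf ξ = q - 1 := by
    rw [orderOf_eq_card_of_forall_mem_zpowers hξ, Nat.card_eq_fintype_card, hq1]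
  have hne : ∀ n : ℕ, 1 ≤ n → n ≤ 4 * k → ξ ^ n ≠ 1 := by
    intro n h1 h2 hpow
    have hdvd := orderOf_dvd_of_pow_eq_one hpow
    rw [horder, hqk] at hdvd
    have := Nat.le_of_dvd (by omega) hdvd
    omega
  exact ⟨no_short hne, exists5 hne hk⟩
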